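/- If N = η and each partition is a singleton Sₙ = {n}, then the continuous relaxation of the partition-based formulation (with auxiliary variables zₙᵇ and bounds derived from x_n ∈ [l_n, u_n]) describes exactly the convex hull of the graph {(x, y) : y = max(0, wᵀx + b), l ≤ x ≤ u}, projected onto (x, y) after also projecting out σ. -/

import Mathlib

private lemma key_div (l u c s t : ℝ) (hc : c ≠ 0) (hs : 0 < s) (hlu : l ≤ u)
    (h1 : s * min (c * l) (c * u) ≤ t) (h2 : t ≤ s * max (c * l) (c * u)) :
    l ≤ t / (s * c) ∧ t / (s * c) ≤ u := by
  rcases hc.lt_or_gt with h | h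
  · have hcu : c * u ≤ c * l := by nlinarith
    rw [min_eq_right hcu] at h1
    rw [max_eq_left hcu] at h2
    have hsc : s * c < 0 := mul_neg_of_pos_of_neg hs h
    constructor
    · rw [le_div_iff_of_neg hsc]; nlinarith
    · rw [div_le_iff_of_neg hsc]; nlinarith
  · have hcl : c * l ≤ c * u := by nlinarith
    rw [min_eq_left hcl] at h1
    rw [max_eq_right hcl] at h2
    have hsc : 0 < s * c := mul_pos hs h
    constructor
    · rw [le_div_iff₀ hsc]; nlinarith
    · rw [div_le_iff₀ hsc]; nlinarith

private lemma inbox (c l u x : ℝ) (h1 : l ≤ x) (h2 : x ≤ u) :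
    min (c * l) (c * u) ≤ c * x ∧ c * x ≤ max (c * l) (c * u) := by
  rcases le_total 0 c with h | h
  · exact ⟨(min_le_left _ _).trans (by nlinarith),
      le_trans (by nlinarith : c * x ≤ c * u) (le_max_right _ _)⟩
  · exact ⟨(min_le_right _ _).trans (by nlinarith),
      le_trans (by nlinarith : c * x ≤ c * l) (le_max_left _ _)⟩

private lemma comb_sum_le (a c s1 s2 m t1 t2 : ℝ) (ha : 0 ≤ a) (hc : 0 ≤ c)
    (h1 : t1 + s1 * m ≤ 0) (h2 : t2 + s2 * m ≤ 0) :
    a * t1 + c * t2 + (a * s1 + c * s2) * m ≤ 0 := by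
  nlinarith [mul_nonpos_of_nonneg_of_nonpos ha h1, mul_nonpos_of_nonneg_of_nonpos hc h2]

private lemma comb_lb (a c s1 s2 m t1 t2 : ℝ) (ha : 0 ≤ a) (hc : 0 ≤ c)
    (h1 : s1 * m ≤ t1) (h2 : s2 * m ≤ t2) :
    (a * s1 + c * s2) * m ≤ a * t1 + c * t2 := by
  nlinarith [mul_le_mul_of_nonneg_left h1 ha, mul_le_mul_of_nonneg_left h2 hc]

private lemma comb_ub (a c s1 s2 m t1 t2 : ℝ) (ha : 0 ≤ a) (hc : 0 ≤ c)
    (h1 : t1 ≤ s1 * m) (h2 : t2 ≤ s2 * m) :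
    a * t1 + c * t2 ≤ (a * s1 + c * s2) * m := by
  nlinarith [mul_le_mul_of_nonneg_left h1 ha, mul_le_mul_of_nonneg_left h2 hc]

/-- Proposition 3: with singleton partitions (N = η), the continuous relaxation
of the partition-based formulation, projected onto (x, y), is exactly the
convex hull of the graph of the ReLU node over the box domain. -/
theorem stmt_9 (η : ℕ) (w : Fin η → ℝ) (b : ℝ) (l u : Fin η → ℝ)
    (hw : ∀ n, w n ≠ 0) (hlu : ∀ n, l n ≤ u n) :
    {p : (Fin η → ℝ) × ℝ |
      ∃ (σ : ℝ) (zb : Fin η → ℝ),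
        0 ≤ σ ∧ σ ≤ 1 ∧
        (∑ n, (w n * p.1 n - zb n)) + σ * b ≤ 0 ∧
        (∑ n, zb n) + (1 - σ) * b ≥ 0 ∧
        p.2 = (∑ n, zb n) + (1 - σ) * b ∧
        (∀ n, σ * min (w n * l n) (w n * u n) ≤ w n * p.1 n - zb n ∧
              w n * p.1 n - zb n ≤ σ * max (w n * l n) (w n * u n)) ∧
        (∀ n, (1 - σ) * min (w n * l n) (w n * u n) ≤ zb n ∧
              zb n ≤ (1 - σ) * max (w n * l n) (w n * u n))} =
    convexHull ℝ
      {p : (Fin η → ℝ) × ℝ |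
        (∀ n, l n ≤ p.1 n ∧ p.1 n ≤ u n) ∧
        p.2 = max 0 ((∑ n, w n * p.1 n) + b)} := by
  set S : Set ((Fin η → ℝ) × ℝ) :=
    {p : (Fin η → ℝ) × ℝ |
      (∀ n, l n ≤ p.1 n ∧ p.1 n ≤ u n) ∧
      p.2 = max 0 ((∑ n, w n * p.1 n) + b)} with hS
  apply Set.Subset.antisymm
  · -- LHS ⊆ convexHull S
    rintro p ⟨σ, zb, hσ0, hσ1, h1, h2, hy, h3, h4⟩
    by_cases hz : σ = 0
    · subst hz
      -- the point itself is in S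
      have hzb : ∀ n, zb n = w n * p.1 n := by
        intro n
        have := h3 n
        simp only [zero_mul] at this
        linarith [this.1, this.2]
      have hbox : ∀ n, l n ≤ p.1 n ∧ p.1 n ≤ u n := by
        intro n
        have h4n := h4 n
        rw [hzb n] at h4n
        simp only [sub_zero, one_mul] at h4n
        have := key_div (l n) (u n) (w n) 1 (w n * p.1 n) (hw n) one_pos (hlu n)
          (by simpa using h4n.1) (by simpa using h4n.2)
        have heq : w n * p.1 n / (1 * w n) = p.1 n := by
          rw [one_mul, mul_comm, mul_div_assoc, div_self (hw n), mul_one]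
        rwa [heq] at this
      have hsum : (∑ n, zb n) = ∑ n, w n * p.1 n :=
        Finset.sum_congr rfl fun n _ => hzb n
      have hnn : 0 ≤ (∑ n, w n * p.1 n) + b := by
        simp only [sub_zero, one_mul] at h2
        rw [hsum] at h2; linarith
      apply subset_convexHull ℝ S
      refine ⟨hbox, ?_⟩
      rw [hy, hsum, max_eq_right hnn]; ring
    by_cases ho : σ = 1
    · subst ho
      have hzb : ∀ n, zb n = 0 := by
        intro n
        have := h4 n
        simp only [sub_self, zero_mul] at this
        linarith [this.1, this.2]
      have hbox : ∀ n, l n ≤ p.1 n ∧ p.1 n ≤ u n := by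
        intro n
        have h3n := h3 n
        rw [hzb n] at h3n
        simp only [sub_zero, one_mul] at h3n
        have := key_div (l n) (u n) (w n) 1 (w n * p.1 n) (hw n) one_pos (hlu n)
          (by simpa using h3n.1) (by simpa using h3n.2)
        have heq : w n * p.1 n / (1 * w n) = p.1 n := by
          rw [one_mul, mul_comm, mul_div_assoc, div_self (hw n), mul_one]
        rwa [heq] at this
      have hsum : (∑ n, zb n) = 0 := by
        simp [hzb]
      have hnp : (∑ n, w n * p.1 n) + b ≤ 0 := by
        have : (∑ n, (w n * p.1 n - zb n)) = ∑ n, w n * p.1 n := by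
          apply Finset.sum_congr rfl; intro n _; rw [hzb n]; ring
        rw [this] at h1; linarith
      apply subset_convexHull ℝ S
      refine ⟨hbox, ?_⟩
      rw [hy, hsum, max_eq_left hnp]; ring
    · -- 0 < σ < 1
      have hσp : 0 < σ := lt_of_le_of_ne hσ0 (Ne.symm hz)
      have hσq : 0 < 1 - σ := by
        rcases lt_or_eq_of_le hσ1 with h | h
        · linarith
        · exact absurd h ho
      have hσne : σ ≠ 0 := ne_of_gt hσp
      have hσqne : (1 : ℝ) - σ ≠ 0 := ne_of_gt hσq
      set A : Fin η → ℝ := fun n => (w n * p.1 n - zb n) / (σ * w n) with hA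
      set B : Fin η → ℝ := fun n => zb n / ((1 - σ) * w n) with hB
      have hAbox : ∀ n, l n ≤ A n ∧ A n ≤ u n := fun n =>
        key_div (l n) (u n) (w n) σ _ (hw n) hσp (hlu n) (h3 n).1 (h3 n).2
      have hBbox : ∀ n, l n ≤ B n ∧ B n ≤ u n := fun n =>
        key_div (l n) (u n) (w n) (1 - σ) _ (hw n) hσq (hlu n) (h4 n).1 (h4 n).2
      have hwA : ∀ n, w n * A n = (w n * p.1 n - zb n) / σ := by
        intro n; rw [hA]; field_simp [hw n]
      have hwB : ∀ n, w n * B n = zb n / (1 - σ) := by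
        intro n; rw [hB]; field_simp [hw n]
      have hsumA : (∑ n, w n * A n) = (∑ n, (w n * p.1 n - zb n)) / σ := by
        rw [Finset.sum_div]; exact Finset.sum_congr rfl fun n _ => hwA n
      have hsumB : (∑ n, w n * B n) = (∑ n, zb n) / (1 - σ) := by
        rw [Finset.sum_div]; exact Finset.sum_congr rfl fun n _ => hwB n
      have hAneg : (∑ n, w n * A n) + b ≤ 0 := by
        rw [hsumA]
        have : (∑ n, (w n * p.1 n - zb n)) / σ ≤ -b := by
          rw [div_le_iff₀ hσp]; linarith
        linarith
      have hBpos : 0 ≤ (∑ n, w n * B n) + b := by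
        rw [hsumB]
        have : -b ≤ (∑ n, zb n) / (1 - σ) := by
          rw [le_div_iff₀ hσq]; linarith
        linarith
      set yB : ℝ := (∑ n, w n * B n) + b with hyB
      have hP1 : ((A, (0 : ℝ)) : (Fin η → ℝ) × ℝ) ∈ S := by
        refine ⟨hAbox, ?_⟩
        simp only
        rw [max_eq_left hAneg]
      have hP2 : ((B, yB) : (Fin η → ℝ) × ℝ) ∈ S := by
        refine ⟨hBbox, ?_⟩
        simp only
        rw [max_eq_right hBpos]
      have hmem := (convex_convexHull ℝ S) (subset_convexHull ℝ S hP1)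
        (subset_convexHull ℝ S hP2) (le_of_lt hσp) (le_of_lt hσq) (by ring)
      have hpe : σ • ((A, (0 : ℝ)) : (Fin η → ℝ) × ℝ) + (1 - σ) • (B, yB) = p := by
        have h1' : (σ • A + (1 - σ) • B : Fin η → ℝ) = p.1 := by
          funext n
          have e1 : σ * A n = (w n * p.1 n - zb n) / w n := by
            rw [hA]; simp only
            rw [mul_div_assoc', mul_div_mul_left _ _ hσne]
          have e2 : (1 - σ) * B n = zb n / w n := by
            rw [hB]; simp only
            rw [mul_div_assoc', mul_div_mul_left _ _ hσqne]
          simp only [Pi.add_apply, Pi.smul_apply, smul_eq_mul]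
          rw [e1, e2, ← add_div, sub_add_cancel, mul_comm, mul_div_assoc,
            div_self (hw n), mul_one]
        have h2' : σ * 0 + (1 - σ) * yB = p.2 := by
          rw [hyB, hsumB, hy]
          field_simp
          ring
        exact Prod.ext h1' h2'
      rwa [hpe] at hmem
  · -- convexHull S ⊆ LHS
    apply convexHull_min
    · -- S ⊆ LHS
      rintro p ⟨hbox, hpy⟩
      by_cases h : (∑ n, w n * p.1 n) + b ≤ 0
      · refine ⟨1, fun _ => 0, zero_le_one, le_refl 1, ?_, ?_, ?_, ?_, ?_⟩
        · simpa using h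
        · simp
        · simp only [sub_self, zero_mul]
          rw [hpy, max_eq_left h]; simp
        · intro n
          have := inbox (w n) (l n) (u n) (p.1 n) (hbox n).1 (hbox n).2
          simpa using this
        · intro n; simp
      · push_neg at h
        refine ⟨0, fun n => w n * p.1 n, le_refl 0, zero_le_one, ?_, ?_, ?_, ?_, ?_⟩
        · simp
        · simp only [sub_zero, one_mul]
          linarith
        · rw [hpy, max_eq_right (le_of_lt h)]; ring_nf
        · intro n; simp
        · intro n
          have := inbox (w n) (l n) (u n) (p.1 n) (hbox n).1 (hbox n).2
          simpa using this
    · -- LHS convex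
      rintro p ⟨σ1, z1, hσ10, hσ11, h11, h12, h1y, h13, h14⟩
        q ⟨σ2, z2, hσ20, hσ21, h21, h22, h2y, h23, h24⟩ a c ha hc hac
      have hx1 : ∀ n, (a • p + c • q).1 n = a * p.1 n + c * q.1 n := fun n => rfl
      have hx2 : (a • p + c • q).2 = a * p.2 + c * q.2 := rfl
      refine ⟨a * σ1 + c * σ2, fun n => a * z1 n + c * z2 n, ?_, ?_, ?_, ?_, ?_, ?_, ?_⟩
      · positivity
      · nlinarith [mul_le_mul_of_nonneg_left hσ11 ha, mul_le_mul_of_nonneg_left hσ21 hc]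
      · have hE : (∑ n, (w n * (a • p + c • q).1 n - (a * z1 n + c * z2 n)))
            = a * (∑ n, (w n * p.1 n - z1 n)) + c * (∑ n, (w n * q.1 n - z2 n)) := by
          rw [Finset.mul_sum, Finset.mul_sum, ← Finset.sum_add_distrib]
          apply Finset.sum_congr rfl
          intro n _
          rw [hx1 n]; ring
        rw [hE]
        exact comb_sum_le a c σ1 σ2 b _ _ ha hc h11 h21
      · have hE : (∑ n, (a * z1 n + c * z2 n))
            = a * (∑ n, z1 n) + c * (∑ n, z2 n) := by
          rw [Finset.mul_sum, Finset.mul_sum, ← Finset.sum_add_distrib]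
        rw [hE]
        have hb : (1 - (a * σ1 + c * σ2)) * b
            = a * ((1 - σ1) * b) + c * ((1 - σ2) * b) := by
          linear_combination (-b) * hac
        nlinarith [mul_nonneg ha h12, mul_nonneg hc h22, hb]
      · have hE : (∑ n, (a * z1 n + c * z2 n))
            = a * (∑ n, z1 n) + c * (∑ n, z2 n) := by
          rw [Finset.mul_sum, Finset.mul_sum, ← Finset.sum_add_distrib]
        rw [hE, hx2, h1y, h2y]
        linear_combination b * hac
      · intro n
        have e1 := h13 n
        have e2 := h23 n
        rw [hx1 n]
        constructor
        · have := comb_lb a c σ1 σ2 (min (w n * l n) (w n * u n)) _ _ ha hc e1.1 e2.1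
          have e : a * (w n * p.1 n - z1 n) + c * (w n * q.1 n - z2 n)
              = w n * (a * p.1 n + c * q.1 n) - (a * z1 n + c * z2 n) := by ring
          exact this.trans (le_of_eq e)
        · have := comb_ub a c σ1 σ2 (max (w n * l n) (w n * u n)) _ _ ha hc e1.2 e2.2
          have e : a * (w n * p.1 n - z1 n) + c * (w n * q.1 n - z2 n)
              = w n * (a * p.1 n + c * q.1 n) - (a * z1 n + c * z2 n) := by ring
          exact (le_of_eq e.symm).trans this
      · intro n
        have e1 := h14 n
        have e2 := h24 n
        constructor
        · have := comb_lb a c (1 - σ1) (1 - σ2) (min (w n * l n) (w n * u n)) _ _ ha hc e1.1 e2.1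
          have hs : (1 - (a * σ1 + c * σ2)) = a * (1 - σ1) + c * (1 - σ2) := by
            linear_combination (-1 : ℝ) * hac
          rw [hs]; exact this
        · have := comb_ub a c (1 - σ1) (1 - σ2) (max (w n * l n) (w n * u n)) _ _ ha hc e1.2 e2.2
          have hs : (1 - (a * σ1 + c * σ2)) = a * (1 - σ1) + c * (1 - σ2) := by
            linear_combination (-1 : ℝ) * hac
          rw [hs]; exact this
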